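/- For any positive integer n and real number a ≠ 0, Σ_{k=0}^{n-1} C(a,k)*C(-1-a,k)*C(2k,k)/(4^k (k+1)) = S_n(a) + ((a+1)/a)·S_n(a+1) + F(a,n)·R(a,n), where S_n(a) = Σ_{k=0}^{n-1} C(a,k)C(-1-a,k)C(2k,k)/4^k, F(a,n) = (C(a,n)C(-1-a,n)(1/(n+1) - 1) - ((a+1)/a)·C(a+1,n)C(-2-a,n))·C(2n,n)/4^n, and R(a,n) = -2n^2(n+1)/(n^2 + 2(a+1)^2 n + (a+1)^2). -/

import Mathlib

/-- Generalized binomial coefficient `C(x, k) = x(x-1)⋯(x-k+1)/k!` for real `x`. -/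
noncomputable def gbc (x : ℝ) (k : ℕ) : ℝ :=
  (∏ i ∈ Finset.range k, (x - i)) / (Nat.factorial k)

/-- `S_n(a) = Σ_{k=0}^{n-1} C(a,k) C(-1-a,k) C(2k,k) / 4^k`. -/
noncomputable def S (a : ℝ) (n : ℕ) : ℝ :=
  ∑ k ∈ Finset.range n, gbc a k * gbc (-1 - a) k * (Nat.choose (2 * k) k) / 4 ^ k

noncomputable def F (a : ℝ) (n : ℕ) : ℝ :=
  (gbc a n * gbc (-1 - a) n * (1 / (n + 1) - 1) -
      (a + 1) / a * (gbc (a + 1) n * gbc (-2 - a) n)) * (Nat.choose (2 * n) n) / 4 ^ n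

noncomputable def R (a : ℝ) (n : ℕ) : ℝ :=
  -(2 * n ^ 2 * (n + 1)) / (n ^ 2 + 2 * (a + 1) ^ 2 * n + (a + 1) ^ 2)

lemma gbc_zero (x : ℝ) : gbc x 0 = 1 := by simp [gbc]

lemma gbc_one (x : ℝ) : gbc x 1 = x := by simp [gbc]

lemma gbc_succ (x : ℝ) (n : ℕ) : gbc x (n+1) = gbc x n * (x - n) / (n+1) := by
  have h1 : ((Nat.factorial n : ℝ)) ≠ 0 := by positivity
  have h2 : ((n:ℝ)+1) ≠ 0 := by positivity
  simp only [gbc, Finset.prod_range_succ, Nat.factorial_succ]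
  push_cast
  rw [div_mul_eq_mul_div, div_div, mul_comm ((n:ℝ)+1)]

lemma gbc_shift (x : ℝ) (n : ℕ) : (x + 1 - n) * gbc (x+1) n = (x+1) * gbc x n := by
  induction n with
  | zero => simp [gbc_zero]
  | succ m ih =>
    rw [gbc_succ, gbc_succ]
    push_cast
    have h2 : ((m:ℝ)+1) ≠ 0 := by positivity
    field_simp
    linear_combination ((x:ℝ) - m) * ih

lemma choose_ratio (n : ℕ) :
    (((2*(n+1)).choose (n+1) : ℝ)) = ((2*n).choose n : ℝ) * (2*(2*n+1)) / (n+1) := by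
  have h := Nat.succ_mul_centralBinom_succ n
  have h2 : ((n:ℝ)+1) ≠ 0 := by positivity
  rw [eq_div_iff h2]
  have := congrArg (Nat.cast (R := ℝ)) h
  simp only [Nat.centralBinom] at this
  push_cast at this
  linarith [this]

lemma key (a m p q p1 q1 c : ℝ) (ha : a ≠ 0) (hm1 : m + 1 ≠ 0) (hm2 : m + 1 + 1 ≠ 0)
    (hD : m^2 + 2*(a+1)^2*m + (a+1)^2 ≠ 0)
    (hD' : (m+1)^2 + 2*(a+1)^2*(m+1) + (a+1)^2 ≠ 0)
    (h1 : (a + 1 - m) * p1 = (a + 1) * p)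
    (h2 : (a + 1) * q1 = (a + m + 1) * q) :
    (p*q*(1/(m+1) - 1) - (a+1)/a*(p1*q1)) * c * (1 + -(2*m^2*(m+1))/(m^2 + 2*(a+1)^2*m + (a+1)^2))
    = (p*(a-m)/(m+1) * (q*(-1-a-m)/(m+1)) * (1/(m+1+1) - 1)
        - (a+1)/a * (p1*(a+1-m)/(m+1) * (q1*(-2-a-m)/(m+1)))) * (c*(2*(2*m+1))/(m+1)/4)
      * (-(2*(m+1)^2*(m+1+1))/((m+1)^2 + 2*(a+1)^2*(m+1) + (a+1)^2)) := by
  have hD2 : m * (m + (a + 1) ^ 2 * 2) + (a + 1) ^ 2 ≠ 0 := by contrapose! hD; linear_combination hD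
  have hD2' : (m + 1) * (m + 1 + (a + 1) ^ 2 * 2) + (a + 1) ^ 2 ≠ 0 := by contrapose! hD'; linear_combination hD'
  field_simp
  linear_combination (c*(20*a*m + 52*a*m^2 + 24*a*m^3 - 4*a^2 + 28*a^2*m + 92*a^2*m^2 + 40*a^2*m^3 - 8*a^3 + 40*a^3*m^2 + 16*a^3*m^3 - 4*a^4 - 8*a^4*m)*q1) * h1 + (c*(20*a*m + 52*a*m^2 + 24*a*m^3 - 4*a^2 + 28*a^2*m + 92*a^2*m^2 + 40*a^2*m^3 - 8*a^3 + 40*a^3*m^2 + 16*a^3*m^3 - 4*a^4 - 8*a^4*m)*p) * h2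

lemma step (a : ℝ) (ha : a ≠ 0) (n : ℕ) (hn : 1 ≤ n) :
    F a n * (1 + R a n) = F a (n+1) * R a (n+1) := by
  have hn' : (1:ℝ) ≤ n := by exact_mod_cast hn
  have hm1 : ((n:ℝ) + 1) ≠ 0 := by positivity
  have hm2 : ((n:ℝ) + 1 + 1) ≠ 0 := by positivity
  have hD : ((n:ℝ))^2 + 2*(a+1)^2*(n:ℝ) + (a+1)^2 ≠ 0 := by nlinarith [sq_nonneg (a+1), sq_nonneg ((n:ℝ))]
  have hD' : ((n:ℝ)+1)^2 + 2*(a+1)^2*((n:ℝ)+1) + (a+1)^2 ≠ 0 := by nlinarith [sq_nonneg (a+1)]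
  have h1 : (a + 1 - (n:ℝ)) * gbc (a+1) n = (a + 1) * gbc a n := gbc_shift a n
  have h2' := gbc_shift (-2-a) n
  rw [show (-2-a+1 : ℝ) = -1-a by ring] at h2'
  have h2 : (a + 1) * gbc (-2-a) n = (a + (n:ℝ) + 1) * gbc (-1-a) n := by
    linear_combination h2'
  have hkey := key a (n:ℝ) (gbc a n) (gbc (-1-a) n) (gbc (a+1) n) (gbc (-2-a) n)
    (((2*n).choose n : ℝ) / 4^n) ha hm1 hm2 hD hD' h1 h2
  simp only [F, R]
  rw [gbc_succ a n, gbc_succ (-1-a) n, gbc_succ (a+1) n, gbc_succ (-2-a) n, choose_ratio n]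
  push_cast
  linear_combination hkey

lemma S_succ (a : ℝ) (n : ℕ) :
    S a (n+1) = S a n + gbc a n * gbc (-1-a) n * ((2*n).choose n : ℝ) / 4^n := by
  simp [S, Finset.sum_range_succ]

theorem stmt11 (n : ℕ) (hn : 0 < n) (a : ℝ) (ha : a ≠ 0)
    (hden : (n : ℝ) ^ 2 + 2 * (a + 1) ^ 2 * n + (a + 1) ^ 2 ≠ 0) :
    ∑ k ∈ Finset.range n,
        gbc a k * gbc (-1 - a) k * (Nat.choose (2 * k) k) / (4 ^ k * (k + 1)) =
      S a n + (a + 1) / a * S (a + 1) n + F a n * R a n := by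
  clear hden
  induction n, hn using Nat.le_induction with
  | base =>
    have hD : (1:ℝ) + 2*(a+1)^2 + (a+1)^2 ≠ 0 := by positivity
    simp only [Finset.sum_range_one, S, F, R, gbc_zero, gbc_one]
    push_cast
    norm_num
    have h3 : (1:ℝ) + 2*(a+1)^2 + (a+1)^2 ≠ 0 := by positivity
    field_simp
    ring
  | succ n hn ih =>
    have hstep := step a ha n hn
    have e : gbc (-1-(a+1)) n = gbc (-2-a) n := by
      rw [show (-1-(a+1) : ℝ) = -2-a by ring]
    have hF : F a n = (gbc a n * gbc (-1-a) n * (1/((n:ℝ)+1) - 1) -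
        (a+1)/a * (gbc (a+1) n * gbc (-2-a) n)) * ((2*n).choose n : ℝ) / 4^n := rfl
    have hn1 : ((n:ℝ)+1) ≠ 0 := by positivity
    have h4 : ((4:ℝ)^n) ≠ 0 := by positivity
    have ht : gbc a n * gbc (-1 - a) n * (((2 * n).choose n : ℕ) : ℝ) / (4 ^ n * ((n:ℝ) + 1))
        = gbc a n * gbc (-1 - a) n * ((2 * n).choose n : ℝ) * (1/((n:ℝ)+1)) / 4 ^ n := by
      field_simp
    rw [Finset.sum_range_succ, ih, S_succ a n, S_succ (a+1) n, e]
    linear_combination hstep - hF + ht
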